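/- Let $H^*(M) = \mathbb{Z}[x_1,\dots,x_n]/(x_i^2 + \sum_j A^i_j x_i x_j)$ and $H^*(\tilde M) = \mathbb{Z}[\tilde x_1,\dots,\tilde x_n]/(\tilde x_i^2 + \sum_j \tilde A^i_j \tilde x_i \tilde x_j)$ for distinct strictly upper-triangular integer matrices $A \ne \tilde A$, and fix $1 \le k < \ell \le n$. Then there exists an integer $\gamma$ and a ring isomorphism $H^*(M) \to H^*(\tilde M)$ sending $x_k \mapsto \tilde x_k - \gamma \tilde x_\ell$ and $x_i \mapsto \tilde x_i$ for $i \ne k$ if and only if: $\tilde A^k_\ell \equiv A^k_\ell \pmod 2$; $\tilde A^i_\ell = A^i_\ell - \tfrac{1}{2} A^i_k (A^k_\ell - \tilde A^k_\ell)$ for all $i \ne k$; $\tilde A^i_j = A^i_j$ for all $i$ and all $j \ne \ell$; and $A^k_j = \tfrac{1}{2}(A^k_\ell + \tilde A^k_\ell) A^\ell_j$ for all $j \ne \ell$. In that case necessarily $\gamma = \tfrac{1}{2}(A^k_\ell - \tilde A^k_\ell)$. -/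

import Mathlib

open MvPolynomial

/-- The ideal of relations `x_i² + ∑_j A^i_j x_i x_j` of a Bott manifold's cohomology. -/
noncomputable def bottIdeal (n : ℕ) (A : Fin n → Fin n → ℤ) :
    Ideal (MvPolynomial (Fin n) ℤ) :=
  Ideal.span (Set.range fun i : Fin n =>
    X i ^ 2 + ∑ j : Fin n, C (A i j) * X i * X j)

/-- The integral cohomology ring `ℤ[x₁,…,x_n]/(x_i² + ∑_j A^i_j x_i x_j)`. -/
abbrev BottRing (n : ℕ) (A : Fin n → Fin n → ℤ) :=
  MvPolynomial (Fin n) ℤ ⧸ bottIdeal n A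

/-- The generator `x_i` of `BottRing n A`. -/
noncomputable def bx (n : ℕ) (A : Fin n → Fin n → ℤ) (i : Fin n) : BottRing n A :=
  Ideal.Quotient.mk (bottIdeal n A) (X i)

namespace BottIsoAux

variable {n : ℕ}

noncomputable def bf (n : ℕ) (A : Fin n → Fin n → ℤ) (i : Fin n) :
    MvPolynomial (Fin n) ℤ :=
  X i ^ 2 + ∑ j : Fin n, C (A i j) * X i * X j

lemma bottIdeal_eq (A : Fin n → Fin n → ℤ) :
    bottIdeal n A = Ideal.span (Set.range (bf n A)) := rfl

lemma bf_mem (A : Fin n → Fin n → ℤ) (i : Fin n) : bf n A i ∈ bottIdeal n A :=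
  Ideal.subset_span ⟨i, rfl⟩

lemma eval_bf (A : Fin n → Fin n → ℤ) (i : Fin n) (v : Fin n → ℤ) :
    eval v (bf n A i) = v i ^ 2 + v i * ∑ j, A i j * v j := by
  simp only [bf, map_add, map_pow, eval_X, map_sum, map_mul, eval_C, Finset.mul_sum]
  congr 1
  exact Finset.sum_congr rfl fun j _ => by ring

lemma eval_bind (v : Fin n → ℤ) (s : Fin n → MvPolynomial (Fin n) ℤ)
    (p : MvPolynomial (Fin n) ℤ) :
    eval v (bind₁ s p) = eval (fun j => eval v (s j)) p := by
  induction p using MvPolynomial.induction_on with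
  | C a => simp
  | add p q hp hq => simp [hp, hq]
  | mul_X p i h => simp [h]

lemma sum_ind' (f : Fin n → ℤ) (a : Fin n) (t : ℤ) :
    ∑ m, f m * (if m = a then t else 0) = f a * t := by
  simp

/-- the substituted variables -/
noncomputable def sv (γ : ℤ) (k l : Fin n) : Fin n → MvPolynomial (Fin n) ℤ :=
  fun j => if j = k then X k - C γ * X l else X j

def wσ (γ : ℤ) (k l : Fin n) (v : Fin n → ℤ) : Fin n → ℤ :=
  fun j => if j = k then v k - γ * v l else v j

lemma sum_w (γ : ℤ) (k l : Fin n) (B : Fin n → ℤ) (v : Fin n → ℤ) :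
    ∑ j, B j * wσ γ k l v j = (∑ j, B j * v j) - γ * B k * v l := by
  have h : ∀ j : Fin n, B j * wσ γ k l v j
      = B j * v j - (if j = k then γ * B k * v l else 0) := by
    intro j
    by_cases hj : j = k
    · simp only [wσ, if_pos hj]; subst hj; ring
    · simp [wσ, hj]
  rw [Finset.sum_congr rfl fun j _ => h j, Finset.sum_sub_distrib]
  simp

lemma eval_g (γ : ℤ) (k l : Fin n) (A : Fin n → Fin n → ℤ) (i : Fin n) (v : Fin n → ℤ) :
    eval v (bind₁ (sv γ k l) (bf n A i))
      = wσ γ k l v i ^ 2 + wσ γ k l v i * ((∑ j, A i j * v j) - γ * A i k * v l) := by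
  have hw : (fun j => eval v (sv γ k l j)) = wσ γ k l v := by
    funext j
    by_cases hj : j = k <;> simp [sv, wσ, hj]
  rw [eval_bind, hw, eval_bf, sum_w]

lemma sum_sub_single (f g : Fin n → ℤ) (a : Fin n) (t : ℤ)
    (h : ∀ j, f j = g j - (if j = a then t else 0)) :
    ∑ j, f j = (∑ j, g j) - t := by
  rw [Finset.sum_congr rfl fun j _ => h j, Finset.sum_sub_distrib]
  simp

lemma sum_add_single (f g : Fin n → ℤ) (a : Fin n) (t : ℤ)
    (h : ∀ j, f j = g j + (if j = a then t else 0)) :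
    ∑ j, f j = (∑ j, g j) + t := by
  rw [Finset.sum_congr rfl fun j _ => h j, Finset.sum_add_distrib]
  simp


lemma hc_two_mul {p q : MvPolynomial (Fin n) ℤ} (hp : p.IsHomogeneous 2) :
    homogeneousComponent 2 (q * p) = C (coeff 0 q) * p := by
  conv_lhs => rw [← sum_homogeneousComponent q]
  rw [Finset.sum_mul, map_sum]
  have h0 : 0 ∈ Finset.range (q.totalDegree + 1) := Finset.mem_range.2 (Nat.succ_pos _)
  rw [Finset.sum_eq_single_of_mem 0 h0]
  · rw [homogeneousComponent_of_mem ((mem_homogeneousSubmodule _ _).2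
      ((homogeneousComponent_isHomogeneous 0 q).mul hp)), if_pos rfl,
      homogeneousComponent_zero]
  · intro d _ hdne
    rw [homogeneousComponent_of_mem ((mem_homogeneousSubmodule _ _).2
      ((homogeneousComponent_isHomogeneous d q).mul hp)), if_neg (by omega)]

lemma bf_isHomogeneous (A : Fin n → Fin n → ℤ) (i : Fin n) :
    (bf n A i).IsHomogeneous 2 := by
  apply MvPolynomial.IsHomogeneous.add
  · simpa using (isHomogeneous_X ℤ i).pow 2
  · apply MvPolynomial.IsHomogeneous.sum
    intro j _
    simpa using ((isHomogeneous_C (Fin n) (A i j)).mul (isHomogeneous_X ℤ i)).mul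
      (isHomogeneous_X ℤ j)

lemma quadratic_mem_repr (At : Fin n → Fin n → ℤ) {p : MvPolynomial (Fin n) ℤ}
    (hp : p.IsHomogeneous 2) (hmem : p ∈ bottIdeal n At) :
    ∃ c : Fin n → ℤ, p = ∑ m, C (c m) * bf n At m := by
  rw [bottIdeal_eq] at hmem
  obtain ⟨q, hq⟩ := (Submodule.mem_span_range_iff_exists_fun _).1 hmem
  refine ⟨fun m => coeff 0 (q m), ?_⟩
  have h2 : homogeneousComponent 2 p = p := by
    rw [homogeneousComponent_of_mem ((mem_homogeneousSubmodule _ _).2 hp), if_pos rfl]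
  calc p = homogeneousComponent 2 p := h2.symm
    _ = homogeneousComponent 2 (∑ m, q m * bf n At m) := by
        rw [show ∑ m, q m * bf n At m = p from by simpa [smul_eq_mul] using hq]
    _ = ∑ m, C (coeff 0 (q m)) * bf n At m := by
        rw [map_sum]
        exact Finset.sum_congr rfl fun m _ => hc_two_mul (bf_isHomogeneous At m)

lemma sv_isHomogeneous (γ : ℤ) (k l : Fin n) (j : Fin n) :
    (sv γ k l j).IsHomogeneous 1 := by
  by_cases hj : j = k
  · rw [sv, if_pos hj]
    apply MvPolynomial.IsHomogeneous.sub (isHomogeneous_X ℤ k)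
    simpa using (isHomogeneous_C (Fin n) γ).mul (isHomogeneous_X ℤ l)
  · rw [sv, if_neg hj]; exact isHomogeneous_X ℤ j

lemma bind_bf_isHomogeneous (γ : ℤ) (k l : Fin n) (A : Fin n → Fin n → ℤ) (i : Fin n) :
    (bind₁ (sv γ k l) (bf n A i)).IsHomogeneous 2 := by
  have : bind₁ (sv γ k l) (bf n A i)
      = sv γ k l i ^ 2 + ∑ j, C (A i j) * sv γ k l i * sv γ k l j := by
    simp [bf, bind₁_C_right]
  rw [this]
  apply MvPolynomial.IsHomogeneous.add
  · simpa using (sv_isHomogeneous γ k l i).pow 2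
  · apply MvPolynomial.IsHomogeneous.sum
    intro j _
    simpa using ((isHomogeneous_C (Fin n) (A i j)).mul (sv_isHomogeneous γ k l i)).mul
      (sv_isHomogeneous γ k l j)

lemma mk_C_int (I : Ideal (MvPolynomial (Fin n) ℤ)) (γ : ℤ) :
    Ideal.Quotient.mk I (C γ) = (γ : MvPolynomial (Fin n) ℤ ⧸ I) := by
  rw [show (C γ : MvPolynomial (Fin n) ℤ) = (γ : MvPolynomial (Fin n) ℤ) from
    eq_intCast (C : ℤ →+* MvPolynomial (Fin n) ℤ) γ]
  exact map_intCast _ γ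

lemma lift_exists (A At : Fin n → Fin n → ℤ) (s : Fin n → MvPolynomial (Fin n) ℤ)
    (hs : ∀ i, bind₁ s (bf n A i) ∈ bottIdeal n At) :
    ∃ Φ : BottRing n A →+* BottRing n At, ∀ p,
      Φ (Ideal.Quotient.mk (bottIdeal n A) p)
        = Ideal.Quotient.mk (bottIdeal n At) (bind₁ s p) := by
  have hle : bottIdeal n A ≤ RingHom.ker
      ((Ideal.Quotient.mk (bottIdeal n At)).comp (bind₁ s : _ →ₐ[ℤ] _).toRingHom) := by
    rw [bottIdeal_eq, Ideal.span_le]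
    rintro _ ⟨i, rfl⟩
    simp only [SetLike.mem_coe, RingHom.mem_ker, RingHom.comp_apply, AlgHom.toRingHom_eq_coe,
      AlgHom.coe_toRingHom]
    exact Ideal.Quotient.eq_zero_iff_mem.2 (hs i)
  exact ⟨Ideal.Quotient.lift _ _ (fun a ha => RingHom.mem_ker.1 (hle ha)),
    fun p => Ideal.Quotient.lift_mk _ _ _⟩


lemma eval_bf_pt1 (B : Fin n → Fin n → ℤ) (hd : ∀ i, B i i = 0) (m a : Fin n) :
    eval (fun v => if v = a then (1:ℤ) else 0) (bf n B m) = if m = a then 1 else 0 := by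
  rw [eval_bf]
  rw [show ∑ j, B m j * (if j = a then (1:ℤ) else 0) = B m a from by
    simpa using sum_ind' (B m) a 1]
  by_cases h : m = a
  · subst h; simp [hd]
  · simp [h]

lemma eval_bf_pt2 (B : Fin n → Fin n → ℤ) (hd : ∀ i, B i i = 0) (a b : Fin n)
    (hab : a ≠ b) (m : Fin n) :
    eval (fun v => (if v = a then (1:ℤ) else 0) + (if v = b then 1 else 0)) (bf n B m)
      = (if m = a then 1 + B a b else 0) + (if m = b then 1 + B b a else 0) := by
  rw [eval_bf]
  rw [show ∑ j, B m j * ((if j = a then (1:ℤ) else 0) + (if j = b then 1 else 0))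
      = B m a + B m b from by
    simp only [mul_add, Finset.sum_add_distrib]
    rw [show ∑ j, B m j * (if j = a then (1:ℤ) else 0) = B m a from by
        simpa using sum_ind' (B m) a 1,
      show ∑ j, B m j * (if j = b then (1:ℤ) else 0) = B m b from by
        simpa using sum_ind' (B m) b 1]]
  by_cases ha : m = a
  · subst ha; simp [hab, hd, Ne.symm hab]
  · by_cases hb : m = b
    · subst hb; simp [ha, hd, Ne.symm ha]
    · simp [ha, hb]

lemma sum_pt1 (B : Fin n → Fin n → ℤ) (hd : ∀ i, B i i = 0) (c : Fin n → ℤ) (a : Fin n) :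
    ∑ m, c m * eval (fun v => if v = a then (1:ℤ) else 0) (bf n B m) = c a := by
  rw [Finset.sum_congr rfl fun m _ => by rw [eval_bf_pt1 B hd m a]]
  simpa using sum_ind' c a 1

lemma sum_pt2 (B : Fin n → Fin n → ℤ) (hd : ∀ i, B i i = 0) (c : Fin n → ℤ)
    (a b : Fin n) (hab : a ≠ b) :
    ∑ m, c m * eval (fun v => (if v = a then (1:ℤ) else 0) + (if v = b then 1 else 0))
        (bf n B m)
      = c a * (1 + B a b) + c b * (1 + B b a) := by
  rw [Finset.sum_congr rfl fun m _ => by rw [eval_bf_pt2 B hd a b hab m]]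
  simp only [mul_add, Finset.sum_add_distrib]
  rw [sum_ind' c a (1 + B a b), sum_ind' c b (1 + B b a)]
  ring

lemma sub_mem (A' At' : Fin n → Fin n → ℤ) (k l : Fin n) (hkl : k ≠ l) (γ : ℤ)
    (hd : ∀ i, A' i i = 0) (hd' : ∀ i, At' i i = 0)
    (h1 : At' k l = A' k l - 2 * γ)
    (h3 : ∀ i j, j ≠ l → At' i j = A' i j)
    (h2 : ∀ i, i ≠ k → At' i l = A' i l - γ * A' i k)
    (h4 : ∀ j, j ≠ l → A' k j = (A' k l - γ) * A' l j)
    (i : Fin n) :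
    bind₁ (sv γ k l) (bf n A' i) ∈ bottIdeal n At' := by
  by_cases hik : i = k
  · subst hik
    have hrep : bind₁ (sv γ i l) (bf n A' i)
        = bf n At' i + C (γ * γ - γ * A' i l) * bf n At' l := by
      apply MvPolynomial.funext
      intro v
      rw [eval_g, map_add, map_mul, eval_C, eval_bf, eval_bf]
      have hwi : wσ γ i l v i = v i - γ * v l := by simp [wσ]
      have hT : ∑ j, At' i j * v j = (∑ j, A' i j * v j) - 2 * γ * v l := by
        apply sum_sub_single _ _ l
        intro j
        by_cases hj : j = l
        · rw [hj, h1]; simp; ring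
        · rw [h3 _ _ hj]; simp [hj]
      have hTl : ∑ j, At' l j * v j = ∑ j, A' l j * v j := by
        apply Finset.sum_congr rfl
        intro j _
        by_cases hj : j = l
        · rw [hj, hd' l, hd l]
        · rw [h3 _ _ hj]
      have hS : ∑ j, A' i j * v j = (A' i l - γ) * (∑ j, A' l j * v j) + A' i l * v l := by
        rw [Finset.mul_sum]
        apply sum_add_single _ _ l
        intro j
        by_cases hj : j = l
        · rw [hj, hd l]; simp
        · rw [h4 _ hj]; simp [hj]; ring
      rw [hwi]
      linear_combination (-(v i)) * hT - (γ * γ - γ * A' i l) * v l * hTl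
        - γ * v l * hS - (v i - γ * v l) * γ * v l * (hd i)
    rw [hrep]
    exact Ideal.add_mem _ (bf_mem _ _) (Ideal.mul_mem_left _ _ (bf_mem _ _))
  · have hrep : bind₁ (sv γ k l) (bf n A' i) = bf n At' i := by
      apply MvPolynomial.funext
      intro v
      rw [eval_g, eval_bf]
      have hwi : wσ γ k l v i = v i := by simp [wσ, hik]
      have hT : ∑ j, At' i j * v j = (∑ j, A' i j * v j) - γ * A' i k * v l := by
        apply sum_sub_single _ _ l
        intro j
        by_cases hj : j = l
        · rw [hj, h2 i hik]; simp; ring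
        · rw [h3 _ _ hj]; simp [hj]
      rw [hwi]
      linear_combination (-(v i)) * hT
    rw [hrep]
    exact bf_mem _ _


lemma backward (A At : Fin n → Fin n → ℤ)
    (hA : ∀ i j, j ≤ i → A i j = 0) (hAt : ∀ i j, j ≤ i → At i j = 0)
    (k l : Fin n) (hkl : k < l)
    (h1 : 2 ∣ (A k l - At k l))
    (h2 : ∀ i, i ≠ k → 2 * At i l = 2 * A i l - A i k * (A k l - At k l))
    (h3 : ∀ i, ∀ j, j ≠ l → At i j = A i j)
    (h4 : ∀ j, j ≠ l → 2 * A k j = (A k l + At k l) * A l j) :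
    ∃ (γ : ℤ) (F : BottRing n A ≃+* BottRing n At),
      F (bx n A k) = bx n At k - (γ : BottRing n At) * bx n At l ∧
      ∀ i, i ≠ k → F (bx n A i) = bx n At i := by
  obtain ⟨γ, hγ⟩ := h1
  have hklne : k ≠ l := ne_of_lt hkl
  have hAtkl : At k l = A k l - 2 * γ := by linarith
  have hs : ∀ i, bind₁ (sv γ k l) (bf n A i) ∈ bottIdeal n At := by
    apply sub_mem A At k l hklne γ (fun i => hA i i le_rfl) (fun i => hAt i i le_rfl)
      hAtkl h3
    · intro i hi
      have h2' := h2 i hi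
      rw [hγ] at h2'
      linarith
    · intro j hj
      have h4' := h4 j hj
      rw [hAtkl] at h4'
      linarith
  have ht : ∀ i, bind₁ (sv (-γ) k l) (bf n At i) ∈ bottIdeal n A := by
    apply sub_mem At A k l hklne (-γ) (fun i => hAt i i le_rfl) (fun i => hA i i le_rfl)
      (by linarith) (fun i j hj => (h3 i j hj).symm)
    · intro i hi
      have h2' := h2 i hi
      rw [hγ] at h2'
      rw [h3 i k hklne]
      linarith
    · intro j hj
      have h4' := h4 j hj
      rw [hAtkl] at h4'
      rw [h3 k j hj, h3 l j hj, hAtkl]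
      linarith
  obtain ⟨Φ, hΦ⟩ := lift_exists A At (sv γ k l) hs
  obtain ⟨Ψ, hΨ⟩ := lift_exists At A (sv (-γ) k l) ht
  have hts : ∀ i, bind₁ (sv (-γ) k l) (sv γ k l i) = X i := by
    intro i
    by_cases hik : i = k
    · rw [hik]; simp [sv, (Ne.symm hklne : l ≠ k)]
    · simp [sv, hik]
  have hst : ∀ i, bind₁ (sv γ k l) (sv (-γ) k l i) = X i := by
    intro i
    by_cases hik : i = k
    · rw [hik]; simp [sv, (Ne.symm hklne : l ≠ k)]
    · simp [sv, hik]
  have hcomp1 : Ψ.comp Φ = RingHom.id _ := by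
    apply RingHom.ext; intro x
    obtain ⟨p, rfl⟩ := Ideal.Quotient.mk_surjective x
    rw [RingHom.comp_apply, hΦ, hΨ, bind₁_bind₁,
      show (fun i => bind₁ (sv (-γ) k l) (sv γ k l i)) = X from funext hts,
      bind₁_X_left]
    rfl
  have hcomp2 : Φ.comp Ψ = RingHom.id _ := by
    apply RingHom.ext; intro x
    obtain ⟨p, rfl⟩ := Ideal.Quotient.mk_surjective x
    rw [RingHom.comp_apply, hΨ, hΦ, bind₁_bind₁,
      show (fun i => bind₁ (sv γ k l) (sv (-γ) k l i)) = X from funext hst,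
      bind₁_X_left]
    rfl
  refine ⟨γ, RingEquiv.ofRingHom Φ Ψ hcomp2 hcomp1, ?_, ?_⟩
  · rw [RingEquiv.ofRingHom_apply, bx, hΦ, bind₁_X_right,
      show sv γ k l k = X k - C γ * X l from by simp [sv],
      map_sub, map_mul, mk_C_int]
    rfl
  · intro i hi
    rw [RingEquiv.ofRingHom_apply, bx, hΦ, bind₁_X_right,
      show sv γ k l i = X i from by simp [sv, hi]]
    rfl


lemma sum_ind1 (f : Fin n → ℤ) (a : Fin n) :
    ∑ m, f m * (if m = a then (1:ℤ) else 0) = f a := by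
  simpa using sum_ind' f a 1

lemma sum_ind2 (f : Fin n → ℤ) (a b : Fin n) :
    ∑ m, f m * ((if m = a then (1:ℤ) else 0) + (if m = b then 1 else 0)) = f a + f b := by
  simp only [mul_add, Finset.sum_add_distrib, sum_ind1]

lemma forward (A At : Fin n → Fin n → ℤ)
    (hA : ∀ i j, j ≤ i → A i j = 0) (hAt : ∀ i j, j ≤ i → At i j = 0)
    (k l : Fin n) (hkl : k < l) (γ : ℤ)
    (F : BottRing n A →+* BottRing n At)
    (hFk : F (bx n A k) = bx n At k - (γ : BottRing n At) * bx n At l)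
    (hFi : ∀ i, i ≠ k → F (bx n A i) = bx n At i) :
    2 * γ = A k l - At k l ∧
    (∀ i, i ≠ k → At i l = A i l - γ * A i k) ∧
    (∀ i j, j ≠ l → At i j = A i j) ∧
    (∀ j, j ≠ l → j ≠ k → γ * A k j = γ * ((A k l - γ) * A l j)) := by
  have hklne : k ≠ l := ne_of_lt hkl
  have hdA : ∀ i, A i i = 0 := fun i => hA i i le_rfl
  have hdAt : ∀ i, At i i = 0 := fun i => hAt i i le_rfl
  have hext : ((Ideal.Quotient.mk (bottIdeal n At)).comp
        (bind₁ (sv γ k l) : MvPolynomial (Fin n) ℤ →ₐ[ℤ] MvPolynomial (Fin n) ℤ).toRingHom)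
      = F.comp (Ideal.Quotient.mk (bottIdeal n A)) := by
    apply MvPolynomial.ringHom_ext
    · intro r
      simp only [RingHom.comp_apply, AlgHom.toRingHom_eq_coe, RingHom.coe_coe, bind₁_C_right]
      rw [mk_C_int, mk_C_int, map_intCast]
    · intro i
      simp only [RingHom.comp_apply, AlgHom.toRingHom_eq_coe, RingHom.coe_coe, bind₁_X_right]
      by_cases hik : i = k
      · rw [hik, show sv γ k l k = X k - C γ * X l from by simp [sv], map_sub, map_mul,
          mk_C_int, show Ideal.Quotient.mk (bottIdeal n A) (X k) = bx n A k from rfl, hFk]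
        rfl
      · rw [show sv γ k l i = X i from by simp [sv, hik],
          show Ideal.Quotient.mk (bottIdeal n A) (X i) = bx n A i from rfl, hFi i hik]
        rfl
  have hφ : ∀ p : MvPolynomial (Fin n) ℤ,
      Ideal.Quotient.mk (bottIdeal n At) (bind₁ (sv γ k l) p)
        = F (Ideal.Quotient.mk (bottIdeal n A) p) := fun p => RingHom.congr_fun hext p
  have hmem : ∀ i, bind₁ (sv γ k l) (bf n A i) ∈ bottIdeal n At := by
    intro i
    apply Ideal.Quotient.eq_zero_iff_mem.1
    rw [hφ, show Ideal.Quotient.mk (bottIdeal n A) (bf n A i) = 0 from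
      Ideal.Quotient.eq_zero_iff_mem.2 (bf_mem A i), map_zero]
  have key : ∀ i : Fin n, ∃ c : Fin n → ℤ, ∀ v : Fin n → ℤ,
      wσ γ k l v i ^ 2 + wσ γ k l v i * ((∑ j, A i j * v j) - γ * A i k * v l)
        = ∑ m, c m * eval v (bf n At m) := by
    intro i
    obtain ⟨c, hc⟩ := quadratic_mem_repr At (bind_bf_isHomogeneous γ k l A i) (hmem i)
    refine ⟨c, fun v => ?_⟩
    rw [← eval_g, hc]
    simp only [map_sum, map_mul, eval_C]
  -- rows i ≠ k
  have rowNe : ∀ i, i ≠ k → ∀ j, j ≠ i →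
      At i j = A i j
        - γ * A i k * ((if l = i then (1:ℤ) else 0) + (if l = j then 1 else 0)) := by
    intro i hik j hji
    obtain ⟨c, hc⟩ := key i
    have h7 : c i = 1 := by
      have h := hc (fun v => if v = i then (1:ℤ) else 0)
      rw [sum_pt1 At hdAt c i] at h
      simp only [wσ, if_neg hik, sum_ind1, hdA i] at h
      by_cases hli : l = i
      · have hAik : A i k = 0 := by rw [← hli]; exact hA l k hkl.le
        rw [hAik] at h
        simp at h
        linarith
      · rw [if_neg hli] at h
        simp at h
        linarith
    have h8 : c j = 0 := by
      have h := hc (fun v => if v = j then (1:ℤ) else 0)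
      rw [sum_pt1 At hdAt c j] at h
      simp only [wσ, if_neg hik, if_neg (Ne.symm hji)] at h
      simp at h
      linarith
    have h := hc (fun v => (if v = i then (1:ℤ) else 0) + (if v = j then 1 else 0))
    rw [sum_pt2 At hdAt c i j (Ne.symm hji)] at h
    simp only [wσ, if_neg hik, sum_ind2, eq_self_iff_true, if_true, if_neg (Ne.symm hji), hdA i,
      h7, h8] at h
    simp at h
    linarith
  -- row k
  obtain ⟨c, hck⟩ := key k
  have h1k : c k = 1 := by
    have h := hck (fun v => if v = k then (1:ℤ) else 0)
    rw [sum_pt1 At hdAt c k] at h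
    simp only [wσ, eq_self_iff_true, if_true, if_neg (Ne.symm hklne), sum_ind1, hdA k] at h
    simp at h
    linarith
  have h2l : c l = γ * γ - γ * A k l := by
    have h := hck (fun v => if v = l then (1:ℤ) else 0)
    rw [sum_pt1 At hdAt c l] at h
    simp only [wσ, eq_self_iff_true, if_true, if_neg hklne, sum_ind1, hdA k] at h
    simp at h
    linarith
  have h3m : ∀ m, m ≠ k → m ≠ l → c m = 0 := by
    intro m hmk hml
    have h := hck (fun v => if v = m then (1:ℤ) else 0)
    rw [sum_pt1 At hdAt c m] at h
    simp only [wσ, eq_self_iff_true, if_true, if_neg (Ne.symm hmk), if_neg (Ne.symm hml), sum_ind1] at h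
    simp at h
    linarith
  have conc1 : 2 * γ = A k l - At k l := by
    have h := hck (fun v => (if v = k then (1:ℤ) else 0) + (if v = l then 1 else 0))
    rw [sum_pt2 At hdAt c k l hklne] at h
    simp only [wσ, eq_self_iff_true, if_true, if_neg hklne, if_neg (Ne.symm hklne), sum_ind2, hdA k,
      h1k, h2l, hAt l k hkl.le] at h
    simp at h
    linarith
  have conc5 : ∀ j, j ≠ k → j ≠ l → At k j = A k j := by
    intro j hjk hjl
    have h := hck (fun v => (if v = k then (1:ℤ) else 0) + (if v = j then 1 else 0))
    rw [sum_pt2 At hdAt c k j (Ne.symm hjk)] at h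
    simp only [wσ, eq_self_iff_true, if_true, if_neg (Ne.symm hklne), if_neg (Ne.symm hjl),
      if_neg (Ne.symm hjk), sum_ind2, hdA k, h1k, h3m j hjk hjl] at h
    simp at h
    linarith
  have conc6 : ∀ j, j ≠ k → j ≠ l → -(γ * A k j) = (γ * γ - γ * A k l) * At l j := by
    intro j hjk hjl
    have h := hck (fun v => (if v = l then (1:ℤ) else 0) + (if v = j then 1 else 0))
    rw [sum_pt2 At hdAt c l j (Ne.symm hjl)] at h
    simp only [wσ, eq_self_iff_true, if_true, if_neg hklne, if_neg (Ne.symm hjk), if_neg (Ne.symm hjl),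
      sum_ind2, hdA k, h2l, h3m j hjk hjl] at h
    simp at h
    linarith
  have conc3 : ∀ i j, j ≠ l → At i j = A i j := by
    intro i j hjl
    by_cases hik : i = k
    · rw [hik]
      by_cases hjk : j = k
      · rw [hjk, hdA k, hdAt k]
      · exact conc5 j hjk hjl
    · by_cases hji : j = i
      · rw [hji, hdA i, hdAt i]
      · have h := rowNe i hik j hji
        by_cases hli : l = i
        · have hAik : A i k = 0 := by rw [← hli]; exact hA l k hkl.le
          rw [hAik] at h
          simpa using h
        · rw [if_neg hli, if_neg (Ne.symm hjl)] at h
          simpa using h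
  have conc2 : ∀ i, i ≠ k → At i l = A i l - γ * A i k := by
    intro i hik
    by_cases hli : l = i
    · rw [← hli, hAt l l le_rfl, hA l l le_rfl, hA l k hkl.le]
      ring
    · have h := rowNe i hik l hli
      simp only [if_neg hli, eq_self_iff_true, if_true] at h
      simpa using h
  refine ⟨conc1, conc2, conc3, ?_⟩
  intro j hjl hjk
  have h6 := conc6 j hjk hjl
  rw [conc3 l j hjl] at h6
  linear_combination -h6

end BottIsoAux

/-- **Criterion for the isomorphism `x_k ↦ x̃_k - γ x̃_ℓ`, `x_i ↦ x̃_i` (`i ≠ k`):**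
it exists iff `Ã^k_ℓ ≡ A^k_ℓ (mod 2)`, `Ã^i_ℓ = A^i_ℓ - ½ A^i_k (A^k_ℓ - Ã^k_ℓ)` for `i ≠ k`,
`Ã^i_j = A^i_j` for `j ≠ ℓ`, and `A^k_j = ½(A^k_ℓ + Ã^k_ℓ) A^ℓ_j` for `j ≠ ℓ`; and then
necessarily `γ = ½(A^k_ℓ - Ã^k_ℓ)`. -/
theorem bott_iso_criterion (n : ℕ) (A At : Fin n → Fin n → ℤ)
    (hA : ∀ i j : Fin n, j ≤ i → A i j = 0)
    (hAt : ∀ i j : Fin n, j ≤ i → At i j = 0)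
    (hne : A ≠ At) (k l : Fin n) (hkl : k < l) :
    ((∃ (γ : ℤ) (F : BottRing n A ≃+* BottRing n At),
        F (bx n A k) = bx n At k - (γ : BottRing n At) * bx n At l ∧
        ∀ i ≠ k, F (bx n A i) = bx n At i) ↔
      ((2 ∣ (A k l - At k l)) ∧
        (∀ i ≠ k, 2 * At i l = 2 * A i l - A i k * (A k l - At k l)) ∧
        (∀ i : Fin n, ∀ j ≠ l, At i j = A i j) ∧
        (∀ j ≠ l, 2 * A k j = (A k l + At k l) * A l j))) ∧
    (∀ (γ : ℤ) (F : BottRing n A ≃+* BottRing n At),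
      (F (bx n A k) = bx n At k - (γ : BottRing n At) * bx n At l ∧
        ∀ i ≠ k, F (bx n A i) = bx n At i) →
      2 * γ = A k l - At k l) := by
  constructor
  · constructor
    · rintro ⟨γ, F, hFk, hFi⟩
      obtain ⟨hc1, hc2, hc3, hc4⟩ :=
        BottIsoAux.forward A At hA hAt k l hkl γ F.toRingHom hFk (fun i hi => hFi i hi)
      refine ⟨⟨γ, by linarith⟩, ?_, hc3, ?_⟩
      · intro i hik
        have h := hc2 i hik
        linear_combination 2 * h - A i k * hc1
      · intro j hjl
        by_cases hjk : j = k
        · rw [hjk, hA k k le_rfl, hA l k hkl.le]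
          ring
        · by_cases hγ : γ = 0
          · exfalso
            apply hne
            funext i j'
            by_cases hj'l : j' = l
            · rw [hj'l]
              by_cases hik : i = k
              · rw [hik]; linarith [hc1]
              · have := hc2 i hik
                rw [hγ] at this
                linarith
            · exact (hc3 i j' hj'l).symm
          · have hcancel := mul_left_cancel₀ hγ (hc4 j hjl hjk)
            linear_combination 2 * hcancel - A l j * hc1
    · rintro ⟨h1, h2, h3, h4⟩
      obtain ⟨γ, F, hFk, hFi⟩ := BottIsoAux.backward A At hA hAt k l hkl h1 h2 h3 h4
      exact ⟨γ, F, hFk, hFi⟩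
  · rintro γ F ⟨hFk, hFi⟩
    exact (BottIsoAux.forward A At hA hAt k l hkl γ F.toRingHom hFk
      (fun i hi => hFi i hi)).1
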